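/- arXiv:2405.11319 — 5 statements merged into one kernel-verified Lean document; each statement's English description precedes it below -/
import Mathlib

section
/- If f is a polynomial in the kernel of the map φ: K[z_1,...,z_{d+r}] → K[s_1,...,s_d] sending z_i to s^{m_i} (monomial with exponent vector m_i), then the homogenization f^h of f with respect to a new variable z_0 lies in the kernel of the map φ^h: K[z_0,...,z_{d+r}] → K[s_1,...,s_d,t_1,...,t_d] sending z_0 to s^{m_{d+r}} and z_i to s^{m_{d+r}-m_i} t^{m_i} for 1 ≤ i ≤ d+r. -/
open MvPolynomial


lemma aeval_mono {σ τ K : Type*} [CommSemiring K]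
    (g : σ → (τ →₀ ℕ)) (a : σ →₀ ℕ) (c : K) :
    aeval (fun i => monomial (g i) (1:K)) (monomial a c)
      = monomial (a.sum fun i e => e • g i) c := by
  classical
  rw [aeval_monomial, algebraMap_eq]
  rw [Finsupp.prod]
  simp only [monomial_pow, one_pow]
  rw [Finsupp.sum, ← monomial_sum_one, C_mul_monomial, mul_one]


/-- Homogenization of a multivariate polynomial with respect to a new variable (`none`). -/
noncomputable def homogenize {K : Type*} [CommRing K] {n : ℕ}
    (f : MvPolynomial (Fin n) K) : MvPolynomial (Option (Fin n)) K :=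
  ∑ s ∈ f.support,
    monomial (Finsupp.mapDomain Option.some s +
      Finsupp.single (none : Option (Fin n)) (f.totalDegree - s.sum fun _ e => e)) (f.coeff s)

/-- if `f` is in the kernel of `φ : K[z_1,…,z_{d+r}] → K[s_1,…,s_d]`,
`z_i ↦ s^{m_i}`, then its homogenization `f^h` (w.r.t. the new variable `z_0`) is in the
kernel of `φ^h`, where `φ^h(z_0) = s^{m_{d+r}}` and `φ^h(z_i) = s^{m_{d+r}-m_i} t^{m_i}`.
Here the `n + 1` generators `m 0, …, m n` play the role of `m_1, …, m_{d+r}` and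
`m (Fin.last n)` is the distinguished generator `m_{d+r}`, dominating all others. -/
theorem stmt0 {K : Type*} [Field K] (d n : ℕ)
    (m : Fin (n + 1) → (Fin d → ℕ))
    (hm : ∀ i j, m i j ≤ m (Fin.last n) j)
    (φ : MvPolynomial (Fin (n + 1)) K →ₐ[K] MvPolynomial (Fin d) K)
    (hφ : φ = aeval fun i => monomial (Finsupp.equivFunOnFinite.symm (m i)) 1)
    (φh : MvPolynomial (Option (Fin (n + 1))) K →ₐ[K] MvPolynomial (Fin d ⊕ Fin d) K)
    (hφh : φh = aeval (fun i => Option.elim i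
        (monomial (Finsupp.equivFunOnFinite.symm
          (Sum.elim (m (Fin.last n)) (0 : Fin d → ℕ))) 1)
        (fun j => monomial (Finsupp.equivFunOnFinite.symm
          (Sum.elim (fun t => m (Fin.last n) t - m j t) (m j))) 1)))
    (f : MvPolynomial (Fin (n + 1)) K) (hf : φ f = 0) :
    φh (homogenize f) = 0 := by
  classical
  set D := f.totalDegree with hD
  set M : Fin (n + 1) → (Fin d →₀ ℕ) := fun i => Finsupp.equivFunOnFinite.symm (m i) with hM
  set G : (Fin d →₀ ℕ) → (Fin d ⊕ Fin d →₀ ℕ) := fun b =>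
    Finsupp.equivFunOnFinite.symm (Sum.elim (fun t => D * m (Fin.last n) t - b t) b) with hG
  set L : MvPolynomial (Fin d) K →ₗ[K] MvPolynomial (Fin d ⊕ Fin d) K :=
    AddMonoidAlgebra.mapDomainLinearMap K K G with hL
  have hLmono : ∀ (b : Fin d →₀ ℕ) (c : K), L (monomial b c) = monomial (G b) c := by
    intro b c
    rw [← single_eq_monomial, ← single_eq_monomial]
    exact AddMonoidAlgebra.mapDomainLinearMap_single _ _ _
  set B : (Fin (n + 1) →₀ ℕ) → (Fin d →₀ ℕ) := fun a => a.sum fun i e => e • M i with hB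
  have hφm : ∀ (a : Fin (n + 1) →₀ ℕ) (c : K), φ (monomial a c) = monomial (B a) c := by
    intro a c; rw [hφ, aeval_mono]
  set g' : Option (Fin (n + 1)) → (Fin d ⊕ Fin d →₀ ℕ) := fun i => Option.elim i
      (Finsupp.equivFunOnFinite.symm (Sum.elim (m (Fin.last n)) (0 : Fin d → ℕ)))
      (fun j => Finsupp.equivFunOnFinite.symm
        (Sum.elim (fun t => m (Fin.last n) t - m j t) (m j))) with hg'
  have hgen : (fun i : Option (Fin (n+1)) => monomial (g' i) (1:K)) = (fun i => Option.elim i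
        (monomial (Finsupp.equivFunOnFinite.symm
          (Sum.elim (m (Fin.last n)) (0 : Fin d → ℕ))) 1)
        (fun j => monomial (Finsupp.equivFunOnFinite.symm
          (Sum.elim (fun t => m (Fin.last n) t - m j t) (m j))) 1)) := by
    funext i; cases i with
    | none => rfl
    | some j => rfl
  have hφhm : ∀ (a : Option (Fin (n + 1)) →₀ ℕ) (c : K),
      φh (monomial a c) = monomial (a.sum fun i e => e • g' i) c := by
    intro a c
    rw [hφh, ← hgen]
    exact aeval_mono g' a c
  have key : ∀ a ∈ f.support,
      ((Finsupp.mapDomain Option.some a +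
        Finsupp.single (none : Option (Fin (n+1))) (D - a.sum fun _ e => e)).sum
          fun i e => e • g' i) = G (B a) := by
    intro a ha
    have hdeg : (a.sum fun _ e => e) ≤ D := le_totalDegree ha
    rw [Finsupp.sum_add_index' (fun i => zero_smul ℕ (g' i))
      (fun i e₁ e₂ => add_smul e₁ e₂ (g' i))]
    rw [Finsupp.sum_mapDomain_index (f := Option.some) (h := fun i e => e • g' i)
      (fun i => zero_smul ℕ (g' i)) (fun i e₁ e₂ => add_smul e₁ e₂ (g' i))]
    rw [Finsupp.sum_single_index (zero_smul ℕ (g' none))]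
    ext t
    have happ : ∀ (s : Fin (n+1) →₀ ℕ) (h : Fin (n+1) → (Fin d ⊕ Fin d →₀ ℕ)) (u : Fin d ⊕ Fin d),
        (s.sum fun j e => e • h j) u = s.sum fun j e => e * (h j u) := by
      intro s h u
      rw [Finsupp.sum_apply]
      simp [Finsupp.sum]
    have hBapp : ∀ (u : Fin d), B a u = a.sum fun j e => e * m j u := by
      intro u
      rw [hB, Finsupp.sum_apply]
      simp [Finsupp.sum, hM]
    rw [Finsupp.add_apply, Finsupp.smul_apply, happ]
    cases t with
    | inl u =>
      simp only [hg', hG, Option.elim, Finsupp.coe_equivFunOnFinite_symm, Sum.elim_inl,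
        smul_eq_mul, hBapp]
      have h1 : (a.sum fun j e => e * (m (Fin.last n) u - m j u))
          = (a.sum fun j e => e * m (Fin.last n) u) - a.sum fun j e => e * m j u := by
        rw [Finsupp.sum, Finsupp.sum, Finsupp.sum,
          ← Finset.sum_tsub_distrib _ (fun j _ => Nat.mul_le_mul_left _ (hm j u))]
        exact Finset.sum_congr rfl fun j _ => Nat.mul_sub _ _ _
      have h2 : (a.sum fun j e => e * m (Fin.last n) u)
          = (a.sum fun _ e => e) * m (Fin.last n) u := by
        rw [Finsupp.sum, Finsupp.sum, Finset.sum_mul]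
      have h3 : (a.sum fun j e => e * m j u) ≤ (a.sum fun _ e => e) * m (Fin.last n) u := by
        rw [← h2, Finsupp.sum, Finsupp.sum]
        exact Finset.sum_le_sum fun j _ => Nat.mul_le_mul_left _ (hm j u)
      have h4 : (D - a.sum fun _ e => e) * m (Fin.last n) u
          = D * m (Fin.last n) u - (a.sum fun _ e => e) * m (Fin.last n) u :=
        Nat.sub_mul _ _ _
      have h5 : (a.sum fun _ e => e) * m (Fin.last n) u ≤ D * m (Fin.last n) u :=
        Nat.mul_le_mul_right _ hdeg
      rw [h1, h2, h4]
      omega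
    | inr u =>
      simp only [hg', hG, Option.elim, Finsupp.coe_equivFunOnFinite_symm, Sum.elim_inr,
        smul_eq_mul, hBapp, Pi.zero_apply, mul_zero, zero_add, add_zero]
  rw [homogenize, map_sum]
  have hstep : ∀ a ∈ f.support, φh (monomial (Finsupp.mapDomain Option.some a +
      Finsupp.single (none : Option (Fin (n+1))) (D - a.sum fun _ e => e)) (f.coeff a))
      = L (monomial (B a) (f.coeff a)) := by
    intro a ha
    rw [hφhm, key a ha, hLmono]
  rw [Finset.sum_congr rfl hstep, ← map_sum]
  have hφf : (∑ a ∈ f.support, monomial (B a) (f.coeff a)) = φ f := by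
    conv_rhs => rw [f.as_sum, map_sum]
    exact Finset.sum_congr rfl fun a _ => (hφm a (f.coeff a)).symm
  rw [hφf, hf, map_zero]
end

section
/- Let Γ ⊆ ℕ^d be a simplicial affine semigroup with ℚ-linearly independent extremal rays a_1,...,a_d among its generators a_1,...,a_{d+r}, and let k ≥ 1. If b ∈ ℕ^d lies in the Apéry set Ap(Γ_k, E) of the k-lifting Γ_k with respect to E = {a_1,...,a_d}, and b = k·a for some a in the subsemigroup generated by a_{d+1},...,a_{d+r}, then a ∈ Ap(Γ, E), i.e., a ∈ Γ and a − a_i ∉ Γ for all 1 ≤ i ≤ d. -/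
/-- if `b` is in the Apéry set of the `k`-lifting `Γ_k` with respect to the
extremal rays `E = {a 0, …, a (d-1)}` and `b = k • a₀` for some `a₀` in the subsemigroup
generated by the non-extremal generators, then `a₀` is in the Apéry set `Ap(Γ, E)`. -/
theorem stmt6 (d r k : ℕ) (hk : 1 ≤ k)
    (a : Fin d → (Fin d → ℕ)) (c : Fin r → (Fin d → ℕ))
    (hindep : LinearIndependent ℚ (fun i => fun j => (a i j : ℚ)))
    (Γ Γk : AddSubmonoid (Fin d → ℕ))
    (hΓ : Γ = AddSubmonoid.closure (Set.range a ∪ Set.range c))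
    (hΓk : Γk = AddSubmonoid.closure (Set.range a ∪ Set.range (fun i => k • c i)))
    (b : Fin d → ℕ)
    (hb : b ∈ Γk ∧ ∀ i : Fin d, ¬ ∃ g ∈ Γk, a i + g = b)
    (a₀ : Fin d → ℕ) (ha₀ : a₀ ∈ AddSubmonoid.closure (Set.range c))
    (hba : b = k • a₀) :
    a₀ ∈ Γ ∧ ∀ i : Fin d, ¬ ∃ g ∈ Γ, a i + g = a₀ := by
  subst hΓ hΓk hba
  refine ⟨AddSubmonoid.closure_mono Set.subset_union_right ha₀, ?_⟩
  rintro i ⟨g, hg, hgi⟩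
  have hkg : k • g ∈ AddSubmonoid.closure (Set.range a ∪ Set.range (fun i => k • c i)) := by
    refine AddSubmonoid.closure_induction
      (motive := fun x _ => k • x ∈ AddSubmonoid.closure (Set.range a ∪ Set.range (fun i => k • c i)))
      ?_ ?_ ?_ hg
    · rintro x (⟨j, rfl⟩ | ⟨l, rfl⟩)
      · exact AddSubmonoid.nsmul_mem _ (AddSubmonoid.subset_closure (Set.mem_union_left _ (Set.mem_range_self j))) k
      · exact AddSubmonoid.subset_closure (Set.mem_union_right _ (Set.mem_range_self l))
    · simpa using zero_mem (AddSubmonoid.closure (Set.range a ∪ Set.range (fun i => k • c i)))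
    · intro x y _ _ hx hy; rw [smul_add]; exact AddSubmonoid.add_mem _ hx hy
  refine hb.2 i ⟨(k - 1) • a i + k • g, AddSubmonoid.add_mem _
    (AddSubmonoid.nsmul_mem _ (AddSubmonoid.subset_closure (Set.mem_union_left _ (Set.mem_range_self i))) _) hkg, ?_⟩
  rw [← hgi, smul_add, ← add_assoc,
    show a i + (k - 1) • a i = (1 + (k - 1)) • a i by rw [add_smul, one_smul],
    show 1 + (k - 1) = k by omega]
end

section
/- Let Γ ⊆ ℕ^d be a simplicial affine semigroup with extremal rays a_1,...,a_d and k ≥ 1. Every element of the Apéry set Ap(Γ_k, E) of the k-lifting that can be written in the subsemigroup generated by k·a_{d+1},...,k·a_{d+r} is of the form k·a with a ∈ Ap(Γ, E); conversely, if moreover |Ap(Γ_k,E)| = |Ap(Γ,E)| and both sets are finite, then Ap(Γ_k, E) = {k·b : b ∈ Ap(Γ, E)}. -/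
/-- every element of `Ap(Γ_k, E)` lying in the subsemigroup generated by the
lifted non-extremal generators `k • c i` has the form `k • a₀` with `a₀ ∈ Ap(Γ, E)`;
and if moreover every element of `Ap(Γ_k,E)` lies in that subsemigroup, both Apéry sets
are finite and have the same cardinality, then `Ap(Γ_k, E) = {k • b : b ∈ Ap(Γ, E)}`. -/
theorem stmt7 (d r k : ℕ) (hk : 1 ≤ k)
    (a : Fin d → (Fin d → ℕ)) (c : Fin r → (Fin d → ℕ))
    (hindep : LinearIndependent ℚ (fun i => fun j => (a i j : ℚ)))
    (Γ Γk : AddSubmonoid (Fin d → ℕ))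
    (hΓ : Γ = AddSubmonoid.closure (Set.range a ∪ Set.range c))
    (hΓk : Γk = AddSubmonoid.closure (Set.range a ∪ Set.range (fun i => k • c i)))
    (apΓ apΓk : Set (Fin d → ℕ))
    (hapΓ : apΓ = {s | s ∈ Γ ∧ ∀ i : Fin d, ¬ ∃ g ∈ Γ, a i + g = s})
    (hapΓk : apΓk = {s | s ∈ Γk ∧ ∀ i : Fin d, ¬ ∃ g ∈ Γk, a i + g = s}) :
    (∀ b ∈ apΓk, b ∈ AddSubmonoid.closure (Set.range (fun i => k • c i)) →
      ∃ a₀ ∈ apΓ, b = k • a₀) ∧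
    ((∀ b ∈ apΓk, b ∈ AddSubmonoid.closure (Set.range (fun i => k • c i))) →
      apΓ.Finite → apΓk.Finite → apΓk.ncard = apΓ.ncard →
      apΓk = (fun b => k • b) '' apΓ) := by
  -- the multiplication-by-k additive monoid hom
  set f : (Fin d → ℕ) →+ (Fin d → ℕ) :=
    { toFun := fun x => k • x
      map_zero' := smul_zero k
      map_add' := fun x y => smul_add k x y } with hf
  have hfc : (f '' Set.range c) = Set.range (fun i => k • c i) := by
    rw [← Set.range_comp]; rfl
  -- a i ∈ Γk
  have haΓk : ∀ i, a i ∈ Γk := by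
    intro i
    rw [hΓk]
    exact AddSubmonoid.subset_closure (Or.inl ⟨i, rfl⟩)
  -- f maps Γ into Γk
  have hmapΓ : ∀ g ∈ Γ, f g ∈ Γk := by
    intro g hg
    rw [hΓ] at hg
    have : AddSubmonoid.closure (Set.range a ∪ Set.range c) ≤ Γk.comap f := by
      apply AddSubmonoid.closure_le.2
      rintro x (⟨i, rfl⟩ | ⟨i, rfl⟩)
      · exact AddSubmonoid.nsmul_mem _ (haΓk i) k
      · rw [hΓk]
        exact AddSubmonoid.subset_closure (Or.inr ⟨i, rfl⟩)
    exact this hg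
  have part1 : ∀ b ∈ apΓk, b ∈ AddSubmonoid.closure (Set.range (fun i => k • c i)) →
      ∃ a₀ ∈ apΓ, b = k • a₀ := by
    intro b hb hbc
    have hb' : b ∈ AddSubmonoid.map f (AddSubmonoid.closure (Set.range c)) := by
      rw [AddMonoidHom.map_mclosure, hfc]; exact hbc
    obtain ⟨a₀, ha₀, rfl⟩ := hb'
    have ha₀Γ : a₀ ∈ Γ := by
      rw [hΓ]
      exact AddSubmonoid.closure_mono (Set.subset_union_right) ha₀
    refine ⟨a₀, ?_, rfl⟩
    rw [hapΓ]
    refine ⟨ha₀Γ, ?_⟩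
    rintro i ⟨g, hg, hgeq⟩
    rw [hapΓk] at hb
    apply hb.2 i
    refine ⟨(k - 1) • a i + k • g, ?_, ?_⟩
    · exact Γk.add_mem (AddSubmonoid.nsmul_mem _ (haΓk i) _) (hmapΓ g hg)
    · have : a i + ((k - 1) • a i + k • g) = k • (a i + g) := by
        rw [← add_assoc, smul_add]
        congr 1
        calc a i + (k - 1) • a i = (k - 1 + 1) • a i := by
              rw [add_smul, one_smul, add_comm]
          _ = k • a i := by rw [Nat.sub_add_cancel hk]
      rw [this, hgeq]
      rfl
  refine ⟨part1, ?_⟩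
  intro hall hfinΓ hfinΓk hcard
  have hsub : apΓk ⊆ (fun b => k • b) '' apΓ := by
    intro b hb
    obtain ⟨a₀, ha₀, hb'⟩ := part1 b hb (hall b hb)
    exact ⟨a₀, ha₀, hb'.symm⟩
  have hinj : Set.InjOn (fun b => k • b) apΓ := by
    intro x _ y _ hxy
    funext j
    have := congrFun hxy j
    simp only [Pi.smul_apply, smul_eq_mul] at this
    exact Nat.eq_of_mul_eq_mul_left hk this
  refine Set.eq_of_subset_of_ncard_le hsub ?_ (hfinΓ.image _)
  rw [Set.ncard_image_of_injOn hinj, hcard]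
end

section
/- Let A = K[x_1,...,x_{d+r}] and let f: A → A be the K-algebra homomorphism with f(x_i) = x_i^k for 1 ≤ i ≤ d and f(x_i) = x_i for d+1 ≤ i ≤ d+r, where k ≥ 1. Then A, viewed as an A-module via f, is faithfully flat. -/
open MvPolynomial

section Aux

variable {K : Type*} [Field K]

/-- The map on exponent vectors induced by raising the first `d` variables to the `k`-th
power. -/
noncomputable def cmap (d k : ℕ) {n : ℕ} (a : Fin n →₀ ℕ) : Fin n →₀ ℕ :=
  Finsupp.onFinset a.support (fun i => if (i : ℕ) < d then k * a i else a i)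
    (fun i h => Finsupp.mem_support_iff.2 (by intro h0; simp [h0] at h))

lemma cmap_apply (d k : ℕ) {n : ℕ} (a : Fin n →₀ ℕ) (i : Fin n) :
    cmap d k a i = if (i : ℕ) < d then k * a i else a i := rfl

lemma cmap_support (d : ℕ) {k : ℕ} (hk : 0 < k) {n : ℕ} (a : Fin n →₀ ℕ) :
    (cmap d k a).support = a.support := by
  ext i
  simp only [Finsupp.mem_support_iff, cmap_apply]
  split_ifs with h
  · simp [Nat.mul_eq_zero, hk.ne']
  · rfl

lemma aeval_monomial_one (d : ℕ) {k : ℕ} (hk : 0 < k) {n : ℕ} (a : Fin n →₀ ℕ) :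
    aeval (fun i : Fin n => if (i : ℕ) < d then (X i : MvPolynomial (Fin n) K) ^ k else X i)
      (monomial a (1 : K)) = monomial (cmap d k a) 1 := by
  rw [aeval_monomial, map_one, one_mul, monomial_eq, C_1, one_mul]
  rw [Finsupp.prod, Finsupp.prod, cmap_support d hk]
  refine Finset.prod_congr rfl fun i _ => ?_
  rw [cmap_apply]
  split_ifs with h
  · rw [pow_mul]
  · rfl

/-- Exponent vectors which are `< k` on the first `d` coordinates and `0` elsewhere. -/
def GoodExp (d k n : ℕ) : Type :=
  {e : Fin n →₀ ℕ // ∀ i : Fin n, ((i : ℕ) < d → e i < k) ∧ (d ≤ (i : ℕ) → e i = 0)}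

/-- Euclidean division componentwise gives a bijection `(goodExp × exponents) ≃ exponents`. -/
noncomputable def expEquiv (d : ℕ) {k : ℕ} (hk : 0 < k) (n : ℕ) :
    GoodExp d k n × (Fin n →₀ ℕ) ≃ (Fin n →₀ ℕ) where
  toFun p := cmap d k p.2 + p.1.1
  invFun b :=
    (⟨Finsupp.onFinset b.support (fun i => if (i : ℕ) < d then b i % k else 0)
        (fun i h => Finsupp.mem_support_iff.2 (by
          intro h0; simp [h0] at h)),
      fun i => by
        constructor
        · intro h
          simpa [Finsupp.onFinset_apply, h] using Nat.mod_lt _ hk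
        · intro h
          simp [Finsupp.onFinset_apply, Nat.not_lt.2 h]⟩,
      Finsupp.onFinset b.support (fun i => if (i : ℕ) < d then b i / k else b i)
        (fun i h => Finsupp.mem_support_iff.2 (by intro h0; simp [h0] at h)))
  left_inv := by
    rintro ⟨⟨e, he⟩, a⟩
    refine Prod.ext (Subtype.ext (Finsupp.ext fun i => ?_)) (Finsupp.ext fun i => ?_) <;>
      simp only [Finsupp.onFinset_apply, Finsupp.add_apply, cmap_apply]
    · split_ifs with h
      · rw [Nat.mul_add_mod, Nat.mod_eq_of_lt ((he i).1 h)]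
      · exact ((he i).2 (le_of_not_gt h)).symm
    · split_ifs with h
      · rw [Nat.mul_add_div hk, Nat.div_eq_of_lt ((he i).1 h), Nat.add_zero]
      · rw [(he i).2 (le_of_not_gt h), Nat.add_zero]
  right_inv := by
    intro b
    refine Finsupp.ext fun i => ?_
    simp only [Finsupp.add_apply, cmap_apply, Finsupp.onFinset_apply]
    split_ifs with h
    · rw [Nat.div_add_mod]
    · rw [Nat.add_zero]

/-- The algebra endomorphism raising the first `d` variables to the `k`-th power. -/
noncomputable def gmap (K : Type*) [Field K] (d r k : ℕ) :
    MvPolynomial (Fin (d + r)) K →ₐ[K] MvPolynomial (Fin (d + r)) K :=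
  aeval (fun i : Fin (d + r) => if (i : ℕ) < d then X i ^ k else X i)

/-- Type synonym for the polynomial ring viewed as a module over itself via `gmap`. -/
def TwistedA (K : Type*) [Field K] (d r k : ℕ) : Type _ := MvPolynomial (Fin (d + r)) K

noncomputable instance (d r k : ℕ) : AddCommGroup (TwistedA K d r k) :=
  inferInstanceAs (AddCommGroup (MvPolynomial (Fin (d + r)) K))

instance (d r k : ℕ) : Nontrivial (TwistedA K d r k) :=
  inferInstanceAs (Nontrivial (MvPolynomial (Fin (d + r)) K))

noncomputable instance (d r k : ℕ) : Module K (TwistedA K d r k) :=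
  inferInstanceAs (Module K (MvPolynomial (Fin (d + r)) K))

noncomputable instance (d r k : ℕ) :
    Module (MvPolynomial (Fin (d + r)) K) (TwistedA K d r k) :=
  @Module.compHom (MvPolynomial (Fin (d + r)) K) (MvPolynomial (Fin (d + r)) K)
    (TwistedA K d r k) _ _
    (inferInstanceAs (Module (MvPolynomial (Fin (d + r)) K) (MvPolynomial (Fin (d + r)) K))) _
    (gmap K d r k).toRingHom

/-- The identity, as a `K`-linear equivalence between `A` and its twisted version. -/
noncomputable def toTL (d r k : ℕ) : MvPolynomial (Fin (d + r)) K ≃ₗ[K] TwistedA K d r k :=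
  LinearEquiv.refl K (MvPolynomial (Fin (d + r)) K)

lemma twisted_smul_def (d r k : ℕ) (a m : MvPolynomial (Fin (d + r)) K) :
    a • (toTL d r k m) = toTL d r k (gmap K d r k a * m) := rfl

theorem free_twisted (d r : ℕ) {k : ℕ} (hk : 0 < k) :
    Module.Free (MvPolynomial (Fin (d + r)) K) (TwistedA K d r k) := by
  set A := MvPolynomial (Fin (d + r)) K
  set ι := GoodExp d k (d + r)
  -- the `A`-linear map sending `single e c` to `g c * X^e`
  let T : (ι →₀ A) →ₗ[A] TwistedA K d r k :=
    Finsupp.linearCombination A (fun e : ι => toTL d r k (monomial e.1 (1 : K)))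
  -- the same map, as a `K`-linear map
  let TK0 : (ι →₀ A) →ₗ[K] A :=
    Finsupp.lsum K fun e : ι =>
      (LinearMap.mulRight K ((monomial e.1 (1 : K) : A))).comp (gmap K d r k).toLinearMap
  let TK : (ι →₀ A) →ₗ[K] TwistedA K d r k := (toTL d r k).toLinearMap.comp TK0
  have hfun : ⇑T = ⇑TK := by
    funext x
    induction x using Finsupp.induction_linear with
    | zero => simp
    | add p q hp hq => simp only [map_add, hp, hq]
    | single e a =>
      simp only [T, TK, TK0, Finsupp.linearCombination_single, Finsupp.lsum_single,
        LinearMap.comp_apply, AlgHom.toLinearMap_apply, LinearMap.mulRight_apply,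
        LinearEquiv.coe_coe]
      exact twisted_smul_def d r k a _
  -- `TK` is bijective, since it maps a basis to a basis
  let b1 : Module.Basis (ι × (Fin (d + r) →₀ ℕ)) K (ι →₀ A) :=
    (Finsupp.basis fun _ : ι => basisMonomials (Fin (d + r)) K).reindex
      (Equiv.sigmaEquivProd ι (Fin (d + r) →₀ ℕ))
  let bT : Module.Basis (Fin (d + r) →₀ ℕ) K (TwistedA K d r k) :=
    (basisMonomials (Fin (d + r)) K).map (toTL d r k)
  let E := b1.equiv bT (expEquiv d hk (d + r))
  have hTK : TK = (E : (ι →₀ A) →ₗ[K] TwistedA K d r k) := by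
    refine b1.ext fun p => ?_
    have hb1 : b1 p = Finsupp.single p.1 (monomial p.2 (1 : K)) := by
      rcases p with ⟨e, a⟩
      simp [b1, Module.Basis.reindex_apply, Finsupp.coe_basis]
    have h1 : TK (Finsupp.single p.1 (monomial p.2 (1 : K))) =
        toTL d r k (monomial (cmap d k p.2 + p.1.1) 1) := by
      simp only [TK, TK0, Finsupp.lsum_single, LinearMap.comp_apply, AlgHom.toLinearMap_apply,
        LinearMap.mulRight_apply, LinearEquiv.coe_coe]
      rw [show (gmap K d r k) ((monomial p.2) (1:K)) = monomial (cmap d k p.2) 1 from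
        aeval_monomial_one d hk p.2, monomial_mul, one_mul]
    have h2 : bT (expEquiv d hk (d + r) p) = toTL d r k (monomial (cmap d k p.2 + p.1.1) 1) := by
      simp [bT, Module.Basis.map_apply, expEquiv]
    have hE : E (b1 p) = bT (expEquiv d hk (d + r) p) := b1.equiv_apply p bT _
    simp only [LinearEquiv.coe_coe]
    rw [hE, hb1, h1, h2]
  have hTbij : Function.Bijective ⇑T := by
    rw [hfun, hTK]
    exact E.bijective
  exact Module.Free.of_basis (Module.Basis.ofRepr (LinearEquiv.ofBijective T hTbij).symm)

end Aux

/-- the polynomial ring `A = K[x_1,…,x_{d+r}]`, viewed as a module over itself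
via the `K`-algebra endomorphism `f` raising the first `d` variables to the `k`-th power and
fixing the others, is faithfully flat. -/
theorem stmt8 {K : Type*} [Field K] (d r k : ℕ) (hk : 1 ≤ k)
    (f : MvPolynomial (Fin (d + r)) K →ₐ[K] MvPolynomial (Fin (d + r)) K)
    (hf : f = aeval (fun i : Fin (d + r) => if (i : ℕ) < d then X i ^ k else X i)) :
    @Module.FaithfullyFlat (MvPolynomial (Fin (d + r)) K) (MvPolynomial (Fin (d + r)) K) _ _
      (Module.compHom _ f.toRingHom) := by
  subst hf
  haveI := free_twisted (K := K) d r hk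
  have h : Module.FaithfullyFlat (MvPolynomial (Fin (d + r)) K) (TwistedA K d r k) :=
    inferInstance
  exact h
end

section
/- Let Γ ⊆ ℕ^d be a simplicial affine semigroup with extremal rays E = {m_1,...,m_d}, all generators componentwise ≤ m_{d+r}. Under the reverse lexicographic orders ≺ on K[z_1,...,z_{d+r}] and ≺_0 on K[z_0,...,z_{d+r}] (with z_0 smallest), the minimal monomial generating sets of the initial ideals coincide: G(in_≺(I(Γ))) = G(in_{≺_0}(I(Γ^h))). Consequently, z_1,...,z_d divide no minimal generator of in_≺(I(Γ)) if and only if z_0, z_1,...,z_d divide no minimal generator of in_{≺_0}(I(Γ^h)). -/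
open MvPolynomial

/-- Total degree of an exponent vector. -/
def expDeg {n : ℕ} (u : Fin n →₀ ℕ) : ℕ := u.sum fun _ e => e

/-- Degree reverse lexicographic comparison `u ≺ v`, where a smaller index means a smaller
variable (`z_1 ≺ z_2 ≺ …`): first compare total degrees, then at the smallest index where
the exponents differ the smaller monomial has the larger exponent. -/
def drlLT {n : ℕ} (u v : Fin n →₀ ℕ) : Prop :=
  expDeg u < expDeg v ∨
    (expDeg u = expDeg v ∧ ∃ i, v i < u i ∧ ∀ j, j < i → u j = v j)

/-- `u` is the leading exponent (w.r.t. degrevlex) of `f`. -/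
def IsLeadExp {K : Type*} [CommSemiring K] {n : ℕ}
    (f : MvPolynomial (Fin n) K) (u : Fin n →₀ ℕ) : Prop :=
  u ∈ f.support ∧ ∀ v ∈ f.support, v ≠ u → drlLT v u

/-- The initial ideal of `I` w.r.t. degrevlex. -/
noncomputable def initialIdeal {K : Type*} [Field K] {n : ℕ} (I : Ideal (MvPolynomial (Fin n) K)) :
    Ideal (MvPolynomial (Fin n) K) :=
  Ideal.span {p | ∃ f ∈ I, f ≠ 0 ∧ ∃ u, IsLeadExp f u ∧ p = monomial u 1}

/-- The exponents of the monomials belonging to an ideal. -/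
def monSet (K : Type*) [Field K] {n : ℕ} (J : Ideal (MvPolynomial (Fin n) K)) :
    Set (Fin n →₀ ℕ) :=
  {u | monomial u (1 : K) ∈ J}

/-- `G(J)`: the minimal monomial generating set of a monomial ideal, identified with the
set of exponents of monomials of `J` that are minimal for divisibility. -/
def minMonGens (K : Type*) [Field K] {n : ℕ} (J : Ideal (MvPolynomial (Fin n) K)) :
    Set (Fin n →₀ ℕ) :=
  {u | u ∈ monSet K J ∧ ∀ v ∈ monSet K J, v ≤ u → v = u}

section Helpers

variable {K : Type*} [CommSemiring K]

lemma prod_monomial_one {σ ι : Type*} (s : Finset ι) (g : ι → (σ →₀ ℕ)) :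
    (∏ i ∈ s, (monomial (g i) (1 : K))) = monomial (∑ i ∈ s, g i) 1 := by
  induction s using Finset.cons_induction with
  | empty => simp
  | cons a s ha ih => rw [Finset.prod_cons, Finset.sum_cons, ih, monomial_mul, one_mul]

lemma aeval_mon {n : ℕ} {σ : Type*} (μ : Fin n → (σ →₀ ℕ)) (u : Fin n →₀ ℕ) (cc : K) :
    (aeval (fun i => monomial (μ i) (1 : K))) (monomial u cc)
      = monomial (u.sum fun i e => e • μ i) cc := by
  rw [aeval_monomial]
  have h : (u.prod fun i e => (monomial (μ i) (1 : K)) ^ e)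
      = monomial (u.sum fun i e => e • μ i) 1 := by
    rw [Finsupp.prod, Finsupp.sum]
    simp_rw [monomial_pow, one_pow]
    exact prod_monomial_one _ _
  rw [h, algebraMap_eq, C_mul_monomial, mul_one]

lemma coeff_sum_monomial {α σ : Type*} [DecidableEq σ] (s : Finset α) (h : α → (σ →₀ ℕ))
    (c : α → K) (m : σ →₀ ℕ) :
    coeff m (∑ w ∈ s, monomial (h w) (c w)) = ∑ w ∈ s, if h w = m then c w else 0 := by
  rw [coeff_sum]
  refine Finset.sum_congr rfl fun w _ => ?_
  rw [coeff_monomial]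

lemma sum_monomial_eq_zero_iff {α σ : Type*} [DecidableEq σ] (s : Finset α) (h : α → (σ →₀ ℕ))
    (c : α → K) :
    (∑ w ∈ s, monomial (h w) (c w)) = 0 ↔
      ∀ m, (∑ w ∈ s, if h w = m then c w else 0) = 0 := by
  rw [MvPolynomial.ext_iff]
  constructor
  · intro H m; have := H m; rwa [coeff_sum_monomial, coeff_zero] at this
  · intro H m; rw [coeff_sum_monomial, coeff_zero]; exact H m

lemma coeff_sum_monomial_of_inj {α σ : Type*} [DecidableEq σ] {s : Finset α} {h : α → (σ →₀ ℕ)}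
    (hinj : Set.InjOn h s) (c : α → K) {w₀ : α} (hw₀ : w₀ ∈ s) :
    coeff (h w₀) (∑ w ∈ s, monomial (h w) (c w)) = c w₀ := by
  rw [coeff_sum_monomial]
  rw [Finset.sum_eq_single_of_mem w₀ hw₀]
  · simp
  · intro w hw hne
    rw [if_neg]
    intro he
    exact hne (hinj hw hw₀ he)

lemma mem_support_sum_monomial {α σ : Type*} [DecidableEq σ] {s : Finset α} {h : α → (σ →₀ ℕ)}
    (hinj : Set.InjOn h s) {c : α → K} (hc : ∀ w ∈ s, c w ≠ 0) {m : σ →₀ ℕ} :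
    m ∈ (∑ w ∈ s, monomial (h w) (c w)).support ↔ ∃ w ∈ s, h w = m := by
  rw [mem_support_iff]
  constructor
  · intro hm
    by_contra hno
    push_neg at hno
    apply hm
    rw [coeff_sum_monomial]
    exact Finset.sum_eq_zero fun w hw => if_neg (hno w hw)
  · rintro ⟨w, hw, rfl⟩
    rw [coeff_sum_monomial_of_inj hinj c hw]
    exact hc w hw

end Helpers


def tdeg {σ : Type*} [Fintype σ] (u : σ →₀ ℕ) : ℕ := ∑ x, u x

lemma expDeg_eq {n : ℕ} (u : Fin n →₀ ℕ) : expDeg u = tdeg u := by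
  rw [expDeg, tdeg, Finsupp.sum_fintype]; intro; rfl

lemma Asum_apply {n : ℕ} {σ : Type*} [Fintype σ] (μ : Fin n → (σ →₀ ℕ)) (u : Fin n →₀ ℕ)
    (x : σ) : (u.sum fun i e => e • μ i) x = ∑ i, u i * (μ i x) := by
  rw [Finsupp.sum_fintype]
  · rw [Finsupp.finset_sum_apply]
    refine Finset.sum_congr rfl fun i _ => ?_
    simp
  · intro i; simp

lemma tdeg_Asum {n : ℕ} {σ : Type*} [Fintype σ] (μ : Fin n → (σ →₀ ℕ)) (u : Fin n →₀ ℕ) :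
    tdeg (u.sum fun i e => e • μ i) = ∑ i, u i * tdeg (μ i) := by
  rw [tdeg]
  simp_rw [Asum_apply]
  rw [Finset.sum_comm]
  refine Finset.sum_congr rfl fun i _ => ?_
  rw [tdeg, Finset.mul_sum]

lemma transfer_iff {α β γ K : Type*} [DecidableEq β] [DecidableEq γ] [AddCommMonoid K]
    {s : Finset α} {B : α → β} {A' : α → γ} {φ : γ → β} (hφ : Function.Injective φ)
    (hcomp : ∀ w ∈ s, B w = φ (A' w)) (c : α → K) :
    (∀ m, (∑ w ∈ s, if A' w = m then c w else 0) = 0) ↔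
      (∀ m', (∑ w ∈ s, if B w = m' then c w else 0) = 0) := by
  constructor
  · intro H m'
    by_cases hm : ∃ w ∈ s, B w = m'
    · obtain ⟨w₀, hw₀, hBw₀⟩ := hm
      have heq : (∑ w ∈ s, if B w = m' then c w else 0)
          = ∑ w ∈ s, if A' w = A' w₀ then c w else 0 := by
        refine Finset.sum_congr rfl fun w hw => ?_
        refine if_congr ?_ rfl rfl
        rw [hcomp w hw, ← hBw₀, hcomp w₀ hw₀]
        exact hφ.eq_iff
      rw [heq]; exact H (A' w₀)
    · push_neg at hm
      exact Finset.sum_eq_zero fun w hw => if_neg (hm w hw)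
  · intro H m
    have heq : (∑ w ∈ s, if A' w = m then c w else 0)
        = ∑ w ∈ s, if B w = φ m then c w else 0 := by
      refine Finset.sum_congr rfl fun w hw => ?_
      refine if_congr ?_ rfl rfl
      rw [hcomp w hw]
      exact hφ.eq_iff.symm
    rw [heq]; exact H (φ m)

section Core
variable {d n : ℕ} (M : Fin n → Fin d → ℕ) (top : Fin d → ℕ)

noncomputable def nu (x : Fin (n+1)) : (Fin d ⊕ Fin d) →₀ ℕ :=
  Fin.cases (Finsupp.equivFunOnFinite.symm (Sum.elim top 0))
    (fun i => Finsupp.equivFunOnFinite.symm (Sum.elim (fun j => top j - M i j) (M i))) x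

noncomputable def Amap (u : Fin n →₀ ℕ) : Fin d →₀ ℕ :=
  u.sum fun i e => e • Finsupp.equivFunOnFinite.symm (M i)

noncomputable def Ahmap (v : Fin (n+1) →₀ ℕ) : (Fin d ⊕ Fin d) →₀ ℕ :=
  v.sum fun j e => e • nu M top j

noncomputable def phie (e : ℕ) (m : Fin d →₀ ℕ) : (Fin d ⊕ Fin d) →₀ ℕ :=
  Finsupp.equivFunOnFinite.symm (Sum.elim (fun j => e * top j - m j) (fun j => m j))

noncomputable def Hom (e : ℕ) (u : Fin n →₀ ℕ) : Fin (n+1) →₀ ℕ :=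
  (e - expDeg u) • Finsupp.single 0 1 + Finsupp.mapDomain Fin.succ u

noncomputable def Rmap (w : Fin (n+1) →₀ ℕ) : Fin n →₀ ℕ :=
  Finsupp.equivFunOnFinite.symm (fun i => w i.succ)

@[simp] lemma equivFOF_symm_apply {σ : Type*} [Finite σ] (f : σ → ℕ) (x : σ) :
    (Finsupp.equivFunOnFinite.symm f) x = f x := rfl

lemma expDeg_sum {m : ℕ} (u : Fin m →₀ ℕ) : expDeg u = ∑ i, u i := by
  rw [expDeg_eq]; rfl

lemma Amap_apply (u : Fin n →₀ ℕ) (j : Fin d) : Amap M u j = ∑ i, u i * M i j := by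
  rw [Amap, Asum_apply]
  simp

@[simp] lemma nu_zero : nu M top 0 = Finsupp.equivFunOnFinite.symm (Sum.elim top 0) := by
  rw [nu, Fin.cases_zero]

@[simp] lemma nu_succ (i : Fin n) : nu M top i.succ
    = Finsupp.equivFunOnFinite.symm (Sum.elim (fun j => top j - M i j) (M i)) := by
  rw [nu, Fin.cases_succ]

lemma mapDomain_succ_apply_zero (u : Fin n →₀ ℕ) :
    Finsupp.mapDomain Fin.succ u 0 = 0 :=
  Finsupp.mapDomain_notin_range _ _ (by rintro ⟨i, hi⟩; exact Fin.succ_ne_zero i hi)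

lemma mapDomain_succ_apply_succ (u : Fin n →₀ ℕ) (i : Fin n) :
    Finsupp.mapDomain Fin.succ u i.succ = u i :=
  Finsupp.mapDomain_apply (Fin.succ_injective n) u i

@[simp] lemma Hom_apply_zero (e : ℕ) (u : Fin n →₀ ℕ) : Hom e u 0 = e - expDeg u := by
  rw [Hom, Finsupp.add_apply, Finsupp.smul_apply, Finsupp.single_apply,
    mapDomain_succ_apply_zero]
  simp

@[simp] lemma Hom_apply_succ (e : ℕ) (u : Fin n →₀ ℕ) (i : Fin n) :
    Hom e u i.succ = u i := by
  rw [Hom, Finsupp.add_apply, Finsupp.smul_apply, Finsupp.single_apply,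
    mapDomain_succ_apply_succ]
  rw [if_neg (by exact fun h => Fin.succ_ne_zero i h.symm)]
  simp

lemma expDeg_Hom {e : ℕ} {u : Fin n →₀ ℕ} (h : expDeg u ≤ e) : expDeg (Hom e u) = e := by
  rw [expDeg_eq, tdeg, Fin.sum_univ_succ, Hom_apply_zero]
  simp_rw [Hom_apply_succ]
  have : expDeg u = ∑ i, u i := expDeg_sum u
  omega

lemma Hom_inj (e : ℕ) {u u' : Fin n →₀ ℕ} (h : Hom e u = Hom e u') : u = u' := by
  ext i
  rw [← Hom_apply_succ e u i, h, Hom_apply_succ]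

lemma expDeg_Rmap (w : Fin (n+1) →₀ ℕ) : w 0 + expDeg (Rmap w) = expDeg w := by
  rw [expDeg_eq, expDeg_eq, tdeg, tdeg, Fin.sum_univ_succ]
  congr 1

lemma Hom_Rmap {e : ℕ} {w : Fin (n+1) →₀ ℕ} (h : expDeg w = e) : Hom e (Rmap w) = w := by
  have hR := expDeg_Rmap w
  ext x
  induction x using Fin.cases with
  | zero => rw [Hom_apply_zero]; omega
  | succ i => rw [Hom_apply_succ, Rmap, equivFOF_symm_apply]

lemma phie_inj (e : ℕ) : Function.Injective (phie top e) := by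
  intro m m' h
  ext j
  have := congrArg (fun v => v (Sum.inr j)) h
  simpa [phie] using this

lemma key1 (hM : ∀ i j, M i j ≤ top j) {e : ℕ} {u : Fin n →₀ ℕ} (h : expDeg u ≤ e) :
    Ahmap M top (Hom e u) = phie top e (Amap M u) := by
  ext x
  rw [Ahmap, Asum_apply]
  rw [Fin.sum_univ_succ]
  simp_rw [Hom_apply_zero, Hom_apply_succ, nu_zero, nu_succ]
  cases x with
  | inl j =>
    simp only [phie, equivFOF_symm_apply, Sum.elim_inl, Amap_apply]
    have hsum : ∑ i, u i * (top j - M i j) + ∑ i, u i * M i j = (∑ i, u i) * top j := by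
      rw [← Finset.sum_add_distrib, Finset.sum_mul]
      refine Finset.sum_congr rfl fun i _ => ?_
      rw [← Nat.mul_add, Nat.sub_add_cancel (hM i j)]
    have hD : expDeg u = ∑ i, u i := expDeg_sum u
    rw [← hD] at hsum
    have hle : expDeg u * top j ≤ e * top j := Nat.mul_le_mul_right _ h
    rw [Nat.sub_mul]
    omega
  | inr j =>
    simp only [phie, equivFOF_symm_apply, Sum.elim_inr, Amap_apply]
    simp

lemma key2 (hM : ∀ i j, M i j ≤ top j) {w : Fin (n+1) →₀ ℕ} {e : ℕ} (h : expDeg w = e) :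
    Ahmap M top w = phie top e (Amap M (Rmap w)) := by
  have h1 : expDeg (Rmap w) ≤ e := by have := expDeg_Rmap w; omega
  conv_lhs => rw [← Hom_Rmap h]
  exact key1 M top hM h1

lemma tdeg_nu (hM : ∀ i j, M i j ≤ top j) (x : Fin (n+1)) :
    tdeg (nu M top x) = ∑ j, top j := by
  induction x using Fin.cases with
  | zero =>
    rw [nu_zero, tdeg]
    rw [Fintype.sum_sum_type]
    simp
  | succ i =>
    rw [nu_succ, tdeg, Fintype.sum_sum_type]
    simp only [equivFOF_symm_apply, Sum.elim_inl, Sum.elim_inr]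
    rw [← Finset.sum_add_distrib]
    refine Finset.sum_congr rfl fun j _ => ?_
    exact Nat.sub_add_cancel (hM i j)

lemma tdeg_Ahmap (hM : ∀ i j, M i j ≤ top j) (v : Fin (n+1) →₀ ℕ) :
    tdeg (Ahmap M top v) = expDeg v * ∑ j, top j := by
  rw [Ahmap, tdeg]
  simp_rw [Asum_apply]
  rw [Finset.sum_comm]
  have : ∀ x, ∑ y : Fin d ⊕ Fin d, v x * nu M top x y = v x * ∑ j, top j := by
    intro x
    rw [← Finset.mul_sum]
    congr 1
    exact tdeg_nu M top hM x
  simp_rw [this]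
  rw [← Finset.sum_mul, expDeg_eq, tdeg]

end Core


lemma Rmap_apply {n : ℕ} (w : Fin (n+1) →₀ ℕ) (i : Fin n) : Rmap w i = w i.succ := rfl

lemma drlLT_Hom {n : ℕ} {e : ℕ} {u w : Fin n →₀ ℕ} (hue : expDeg u = e)
    (hwe : expDeg w ≤ e) (h : drlLT w u) : drlLT (Hom e w) (Hom e u) := by
  have hDu : expDeg (Hom e u) = e := expDeg_Hom hue.le
  have hDw : expDeg (Hom e w) = e := expDeg_Hom hwe
  right
  refine ⟨hDw.trans hDu.symm, ?_⟩
  rcases h with hlt | ⟨hde, i, hi, hbefore⟩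
  · refine ⟨0, ?_, ?_⟩
    · rw [Hom_apply_zero, Hom_apply_zero, hue]
      omega
    · intro j hj
      exact absurd hj (Fin.not_lt_zero j)
  · refine ⟨i.succ, ?_, ?_⟩
    · rw [Hom_apply_succ, Hom_apply_succ]
      exact hi
    · intro j hj
      induction j using Fin.cases with
      | zero => rw [Hom_apply_zero, Hom_apply_zero, hde]
      | succ j' =>
        rw [Hom_apply_succ, Hom_apply_succ]
        exact hbefore j' (by rwa [Fin.succ_lt_succ_iff] at hj)

lemma drlLT_Rmap {n : ℕ} {e : ℕ} {v w : Fin (n+1) →₀ ℕ} (hv : expDeg v = e)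
    (hw : expDeg w = e) (h : drlLT w v) : drlLT (Rmap w) (Rmap v) := by
  have hv' := expDeg_Rmap v
  have hw' := expDeg_Rmap w
  rcases h with hlt | ⟨_, i, hi, hbefore⟩
  · exact absurd hlt (by omega)
  · induction i using Fin.cases with
    | zero =>
      left
      have : v 0 < w 0 := hi
      omega
    | succ i' =>
      right
      have h0 : w 0 = v 0 := hbefore 0 (Fin.succ_pos i')
      constructor
      · omega
      · refine ⟨i', ?_, ?_⟩
        · rw [Rmap_apply, Rmap_apply]; exact hi
        · intro j hj
          rw [Rmap_apply, Rmap_apply]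
          exact hbefore j.succ (by rwa [Fin.succ_lt_succ_iff])

section Poly

lemma lead_deg_le {K : Type*} [CommSemiring K] {n : ℕ} {f : MvPolynomial (Fin n) K}
    {u : Fin n →₀ ℕ} (h : IsLeadExp f u) : ∀ w ∈ f.support, expDeg w ≤ expDeg u := by
  intro w hw
  by_cases hwu : w = u
  · rw [hwu]
  · rcases h.2 w hw hwu with hlt | ⟨he, _⟩
    · exact hlt.le
    · exact he.le

lemma aeval_eq {K : Type*} [CommSemiring K] {n : ℕ} {σ : Type*}
    (μ : Fin n → (σ →₀ ℕ)) (f : MvPolynomial (Fin n) K) :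
    aeval (fun i => monomial (μ i) (1 : K)) f
      = ∑ w ∈ f.support, monomial (w.sum fun i e => e • μ i) (coeff w f) := by
  conv_lhs => rw [f.as_sum]
  rw [map_sum]
  exact Finset.sum_congr rfl fun w _ => aeval_mon μ w _

lemma aeval_eq_zero_iff {K : Type*} [CommSemiring K] {n : ℕ} {σ : Type*} [DecidableEq σ]
    (μ : Fin n → (σ →₀ ℕ)) (f : MvPolynomial (Fin n) K) :
    aeval (fun i => monomial (μ i) (1 : K)) f = 0 ↔
      ∀ m, (∑ w ∈ f.support, if (w.sum fun i e => e • μ i) = m then coeff w f else 0) = 0 := by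
  rw [aeval_eq, sum_monomial_eq_zero_iff]

variable {d n : ℕ} (M : Fin n → Fin d → ℕ) (top : Fin d → ℕ) {K : Type*} [Field K]

lemma Hom_self {u : Fin n →₀ ℕ} : Hom (expDeg u) u = Finsupp.mapDomain Fin.succ u := by
  rw [Hom, Nat.sub_self, zero_smul, zero_add]

lemma homog (hM : ∀ i j, M i j ≤ top j) {f : MvPolynomial (Fin n) K}
    (hker : aeval (fun i => monomial (Finsupp.equivFunOnFinite.symm (M i)) (1 : K)) f = 0)
    {u : Fin n →₀ ℕ} (hu : IsLeadExp f u) :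
    ∃ g : MvPolynomial (Fin (n+1)) K, g ≠ 0 ∧
      aeval (fun x => monomial (nu M top x) (1 : K)) g = 0 ∧
      IsLeadExp g (Finsupp.mapDomain Fin.succ u) := by
  obtain ⟨humem, hulead⟩ := hu
  set e := expDeg u with he
  have hsup : ∀ w ∈ f.support, expDeg w ≤ e := lead_deg_le ⟨humem, hulead⟩
  have hinj : Set.InjOn (Hom e) (f.support : Set (Fin n →₀ ℕ)) :=
    fun w _ w' _ h => Hom_inj e h
  have hc : ∀ w ∈ f.support, coeff w f ≠ 0 := fun w hw => mem_support_iff.mp hw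
  refine ⟨∑ w ∈ f.support, monomial (Hom e w) (coeff w f), ?_, ?_, ?_⟩
  · intro h0
    have h1 := coeff_sum_monomial_of_inj hinj (fun w => coeff w f) humem
    rw [h0, coeff_zero] at h1
    exact (hc u humem) h1.symm
  · rw [map_sum]
    simp_rw [aeval_mon]
    rw [sum_monomial_eq_zero_iff]
    have hker' := (aeval_eq_zero_iff _ f).mp hker
    exact (transfer_iff (phie_inj top e)
      (fun w hw => key1 M top hM (hsup w hw)) (fun w => coeff w f)).mp hker'
  · have hHu : Hom e u = Finsupp.mapDomain Fin.succ u := Hom_self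
    constructor
    · rw [← hHu]
      exact (mem_support_sum_monomial hinj hc).mpr ⟨u, humem, rfl⟩
    · intro v hv hne
      rw [mem_support_sum_monomial hinj hc] at hv
      obtain ⟨w, hw, rfl⟩ := hv
      have hwu : w ≠ u := fun h => hne (by rw [h, hHu])
      rw [← hHu]
      exact drlLT_Hom rfl (hsup w hw) (hulead w hw hwu)

lemma dehom (hM : ∀ i j, M i j ≤ top j) (hT : 0 < ∑ j, top j)
    {f : MvPolynomial (Fin (n+1)) K}
    (hker : aeval (fun x => monomial (nu M top x) (1 : K)) f = 0)
    {v : Fin (n+1) →₀ ℕ} (hv : IsLeadExp f v) :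
    ∃ g : MvPolynomial (Fin n) K, g ≠ 0 ∧
      aeval (fun i => monomial (Finsupp.equivFunOnFinite.symm (M i)) (1 : K)) g = 0 ∧
      IsLeadExp g (Rmap v) ∧ Finsupp.mapDomain Fin.succ (Rmap v) ≤ v := by
  classical
  obtain ⟨hvmem, hvlead⟩ := hv
  set e := expDeg v with he
  set s := f.support.filter (fun w => expDeg w = e) with hs
  have hsub : s ⊆ f.support := Finset.filter_subset _ _
  have hdeg : ∀ w ∈ s, expDeg w = e := fun w hw => (Finset.mem_filter.mp hw).2
  have hinj : Set.InjOn Rmap (s : Set (Fin (n+1) →₀ ℕ)) := by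
    intro w hw w' hw' h
    rw [← Hom_Rmap (hdeg w hw), ← Hom_Rmap (hdeg w' hw'), h]
  have hvs : v ∈ s := Finset.mem_filter.mpr ⟨hvmem, rfl⟩
  have hc : ∀ w ∈ s, coeff w f ≠ 0 := fun w hw => mem_support_iff.mp (hsub hw)
  have hker' := (aeval_eq_zero_iff _ f).mp hker
  have hstepA : ∀ m', (∑ w ∈ s, if Ahmap M top w = m' then coeff w f else 0) = 0 := by
    intro m'
    by_cases hm : tdeg m' = e * ∑ j, top j
    · have heq : (∑ w ∈ s, if Ahmap M top w = m' then coeff w f else 0)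
          = ∑ w ∈ f.support, if Ahmap M top w = m' then coeff w f else 0 := by
        refine Finset.sum_subset hsub fun w hwf hws => if_neg fun hEq => hws ?_
        refine Finset.mem_filter.mpr ⟨hwf, ?_⟩
        have h1 := tdeg_Ahmap M top hM w
        rw [hEq, hm] at h1
        exact Nat.eq_of_mul_eq_mul_right hT h1.symm
      rw [heq]
      exact hker' m'
    · refine Finset.sum_eq_zero fun w hw => if_neg fun hEq => hm ?_
      rw [← hEq, tdeg_Ahmap M top hM w, hdeg w hw]
  refine ⟨∑ w ∈ s, monomial (Rmap w) (coeff w f), ?_, ?_, ?_, ?_⟩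
  · intro h0
    have h1 := coeff_sum_monomial_of_inj hinj (fun w => coeff w f) hvs
    rw [h0, coeff_zero] at h1
    exact (hc v hvs) h1.symm
  · rw [map_sum]
    simp_rw [aeval_mon]
    rw [sum_monomial_eq_zero_iff]
    exact (transfer_iff (phie_inj top e)
      (fun w hw => key2 M top hM (hdeg w hw)) (fun w => coeff w f)).mpr hstepA
  · constructor
    · exact (mem_support_sum_monomial hinj hc).mpr ⟨v, hvs, rfl⟩
    · intro v' hv' hne
      rw [mem_support_sum_monomial hinj hc] at hv'
      obtain ⟨w, hw, rfl⟩ := hv'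
      have hwv : w ≠ v := fun h => hne (by rw [h])
      exact drlLT_Rmap rfl (hdeg w hw) (hvlead w (hsub hw) hwv)
  · intro x
    induction x using Fin.cases with
    | zero =>
      rw [mapDomain_succ_apply_zero]
      exact Nat.zero_le _
    | succ i =>
      rw [mapDomain_succ_apply_succ, Rmap_apply]

end Poly

section Assembly

def leadSet {K : Type*} [Field K] {n : ℕ} (I : Ideal (MvPolynomial (Fin n) K)) :
    Set (Fin n →₀ ℕ) := {u | ∃ f ∈ I, f ≠ 0 ∧ IsLeadExp f u}

lemma monSet_initialIdeal {K : Type*} [Field K] {n : ℕ} (I : Ideal (MvPolynomial (Fin n) K)) :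
    monSet K (initialIdeal I) = {m | ∃ u ∈ leadSet I, u ≤ m} := by
  have himg : {p | ∃ f ∈ I, f ≠ 0 ∧ ∃ u, IsLeadExp f u ∧ p = monomial u (1 : K)}
      = (fun s => monomial s (1 : K)) '' (leadSet I) := by
    ext p
    simp only [Set.mem_setOf_eq, Set.mem_image, leadSet]
    constructor
    · rintro ⟨f, hf, hf0, u, hlead, rfl⟩; exact ⟨u, ⟨f, hf, hf0, hlead⟩, rfl⟩
    · rintro ⟨u, ⟨f, hf, hf0, hlead⟩, rfl⟩; exact ⟨f, hf, hf0, u, hlead, rfl⟩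
  classical
  ext m
  rw [monSet, Set.mem_setOf_eq, initialIdeal, himg, mem_ideal_span_monomial_image]
  have hsupp : (monomial m (1 : K)).support = {m} := by
    rw [support_monomial, if_neg one_ne_zero]
  rw [hsupp]
  constructor
  · intro h
    exact h m (Finset.mem_singleton_self m)
  · intro h xi hxi
    rw [Finset.mem_singleton] at hxi
    rw [hxi]
    exact h

lemma succ_le_succ_iff {n : ℕ} {u w : Fin n →₀ ℕ} :
    Finsupp.mapDomain Fin.succ u ≤ Finsupp.mapDomain Fin.succ w ↔ u ≤ w := by
  constructor
  · intro h i
    have := h i.succ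
    rwa [mapDomain_succ_apply_succ, mapDomain_succ_apply_succ] at this
  · intro h x
    induction x using Fin.cases with
    | zero => rw [mapDomain_succ_apply_zero]; exact Nat.zero_le _
    | succ i => rw [mapDomain_succ_apply_succ, mapDomain_succ_apply_succ]; exact h i

lemma Rmap_mapDomain {n : ℕ} (u : Fin n →₀ ℕ) :
    Rmap (Finsupp.mapDomain Fin.succ u) = u := by
  ext i
  rw [Rmap_apply, mapDomain_succ_apply_succ]

lemma eq_mapDomain_of_zero {n : ℕ} {w : Fin (n+1) →₀ ℕ} (h : w 0 = 0) :
    w = Finsupp.mapDomain Fin.succ (Rmap w) := by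
  ext x
  induction x using Fin.cases with
  | zero => rw [mapDomain_succ_apply_zero, h]
  | succ i => rw [mapDomain_succ_apply_succ, Rmap_apply]

lemma min_eq {n : ℕ} (S : Set (Fin n →₀ ℕ)) :
    {v : Fin (n+1) →₀ ℕ | (∃ u ∈ S, Finsupp.mapDomain Fin.succ u ≤ v) ∧
      ∀ v', (∃ u ∈ S, Finsupp.mapDomain Fin.succ u ≤ v') → v' ≤ v → v' = v}
    = Finsupp.mapDomain Fin.succ ''
      {m : Fin n →₀ ℕ | (∃ u ∈ S, u ≤ m) ∧ ∀ m', (∃ u ∈ S, u ≤ m') → m' ≤ m → m' = m} := by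
  ext v
  simp only [Set.mem_setOf_eq, Set.mem_image]
  constructor
  · rintro ⟨⟨u, hu, hle⟩, hmin⟩
    have hv : Finsupp.mapDomain Fin.succ u = v :=
      hmin _ ⟨u, hu, le_refl _⟩ hle
    refine ⟨u, ⟨⟨u, hu, le_refl u⟩, ?_⟩, hv⟩
    intro m' ⟨u', hu', hle'⟩ hm'
    have h1 : Finsupp.mapDomain Fin.succ m' = v := by
      refine hmin _ ⟨u', hu', succ_le_succ_iff.mpr hle'⟩ ?_
      rw [← hv]
      exact succ_le_succ_iff.mpr hm'
    apply Finsupp.mapDomain_injective (Fin.succ_injective n)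
    rw [h1, ← hv]
  · rintro ⟨m, ⟨⟨u, hu, hle⟩, hmin⟩, rfl⟩
    refine ⟨⟨u, hu, succ_le_succ_iff.mpr hle⟩, ?_⟩
    rintro v' ⟨u', hu', hle'⟩ hv'
    have h0 : v' 0 = 0 := by
      have := hv' 0
      rw [mapDomain_succ_apply_zero] at this
      omega
    have hdecomp := eq_mapDomain_of_zero h0
    rw [hdecomp] at hv' hle' ⊢
    have h1 : Rmap v' = m := by
      refine hmin _ ⟨u', hu', ?_⟩ (succ_le_succ_iff.mp hv')
      calc u' = Rmap (Finsupp.mapDomain Fin.succ u') := (Rmap_mapDomain u').symm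
           _ ≤ Rmap (Finsupp.mapDomain Fin.succ (Rmap v')) := by
                intro i
                rw [Rmap_apply, Rmap_apply]
                exact hle' i.succ
           _ = Rmap v' := Rmap_mapDomain (Rmap v')
    rw [h1]

end Assembly



/-- for a simplicial affine semigroup `Γ` (extremal-ray generators `a`,
further generators `c` with `top = c (last)` dominating all of them), the minimal monomial
generators of `in_≺(I(Γ))` and of `in_{≺₀}(I(Γ^h))` coincide (via the embedding
`z_i ↦ z_i`, `z_0` being the new smallest variable), and consequently `z_1,…,z_d` divide no
minimal generator of `in_≺(I(Γ))` iff `z_0,…,z_d` divide no minimal generator of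
`in_{≺₀}(I(Γ^h))`. -/
theorem stmt11 {K : Type*} [Field K] (d r : ℕ) (hd : 0 < d)
    (a : Fin d → (Fin d → ℕ)) (c : Fin (r + 1) → (Fin d → ℕ))
    (top : Fin d → ℕ) (htop : top = c (Fin.last r))
    (hindep : LinearIndependent ℚ (fun i => fun j => (a i j : ℚ)))
    (hbdda : ∀ i j, a i j ≤ top j) (hbddc : ∀ i j, c i j ≤ top j)
    (hsimp : ∀ i : Fin (r + 1), ∃ q : Fin d → ℚ, (∀ t, 0 ≤ q t) ∧
      (fun j => (c i j : ℚ)) = ∑ t, q t • fun j => (a t j : ℚ))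
    (IΓ : Ideal (MvPolynomial (Fin (d + r + 1)) K))
    (hIΓ : IΓ = RingHom.ker (aeval (fun i : Fin (d + r + 1) => monomial
      (Finsupp.equivFunOnFinite.symm (Fin.append a c i)) (1 : K))).toRingHom)
    (IΓh : Ideal (MvPolynomial (Fin (d + r + 2)) K))
    (hIΓh : IΓh = RingHom.ker (aeval (Fin.cases
      (monomial (Finsupp.equivFunOnFinite.symm
        (Sum.elim top (0 : Fin d → ℕ))) (1 : K))
      (fun i : Fin (d + r + 1) => monomial (Finsupp.equivFunOnFinite.symm
        (Sum.elim (fun j => top j - Fin.append a c i j) (Fin.append a c i))) (1 : K)))).toRingHom) :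
    (minMonGens K (initialIdeal IΓh) =
      Finsupp.mapDomain (Fin.succ) '' minMonGens K (initialIdeal IΓ)) ∧
    ((∀ u ∈ minMonGens K (initialIdeal IΓ), ∀ i : Fin (d + r + 1), (i : ℕ) < d → u i = 0) ↔
      (∀ u ∈ minMonGens K (initialIdeal IΓh), ∀ i : Fin (d + r + 2), (i : ℕ) < d + 1 →
        u i = 0)) := by
  classical
  have hM : ∀ (i : Fin (d + r + 1)) (j : Fin d), Fin.append a c i j ≤ top j := by
    intro i j
    have key : ∀ i : Fin (d + (r + 1)), Fin.append a c i j ≤ top j := by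
      intro i
      induction i using Fin.addCases with
      | left i0 => rw [Fin.append_left]; exact hbdda i0 j
      | right i0 => rw [Fin.append_right]; exact hbddc i0 j
    exact key i
  have hT : 0 < ∑ j, top j := by
    rcases Nat.eq_zero_or_pos (∑ j, top j) with h0 | h
    · exfalso
      have htop0 : ∀ j, top j = 0 := fun j =>
        (Finset.sum_eq_zero_iff.mp h0) j (Finset.mem_univ j)
      have hzero : (fun j => (a ⟨0, hd⟩ j : ℚ)) = 0 := by
        funext j
        have h1 := hbdda ⟨0, hd⟩ j
        rw [htop0 j, Nat.le_zero] at h1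
        rw [h1]
        simp
      exact hindep.ne_zero ⟨0, hd⟩ hzero
    · exact h
  have hkerΓ : ∀ f : MvPolynomial (Fin (d + r + 1)) K, f ∈ IΓ ↔
      aeval (fun i : Fin (d + r + 1) => monomial
        (Finsupp.equivFunOnFinite.symm (Fin.append a c i)) (1 : K)) f = 0 := by
    intro f
    rw [hIΓ]
    exact RingHom.mem_ker
  have hcases : (Fin.cases
      (monomial (Finsupp.equivFunOnFinite.symm
        (Sum.elim top (0 : Fin d → ℕ))) (1 : K))
      (fun i : Fin (d + r + 1) => monomial (Finsupp.equivFunOnFinite.symm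
        (Sum.elim (fun j => top j - Fin.append a c i j) (Fin.append a c i))) (1 : K)))
      = fun x : Fin (d + r + 2) => monomial (nu (Fin.append a c) top x) (1 : K) := by
    funext x
    induction x using Fin.cases with
    | zero => rw [Fin.cases_zero, nu_zero]
    | succ i => rw [Fin.cases_succ, nu_succ]
  have hkerΓh : ∀ f : MvPolynomial (Fin (d + r + 2)) K, f ∈ IΓh ↔
      aeval (fun x : Fin (d + r + 2) =>
        monomial (nu (Fin.append a c) top x) (1 : K)) f = 0 := by
    intro f
    rw [hIΓh, hcases]
    exact RingHom.mem_ker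
  have hleadΓ_map : ∀ u ∈ leadSet IΓ, Finsupp.mapDomain Fin.succ u ∈ leadSet IΓh := by
    rintro u ⟨f, hf, hf0, hlead⟩
    obtain ⟨g, hg0, hgker, hglead⟩ := homog (Fin.append a c) top hM ((hkerΓ f).mp hf) hlead
    exact ⟨g, (hkerΓh g).mpr hgker, hg0, hglead⟩
  have hleadΓh_sub : ∀ v ∈ leadSet IΓh, ∃ u ∈ leadSet IΓ,
      Finsupp.mapDomain Fin.succ u ≤ v := by
    rintro v ⟨f, hf, hf0, hlead⟩
    obtain ⟨g, hg0, hgker, hglead, hle⟩ :=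
      dehom (Fin.append a c) top hM hT ((hkerΓh f).mp hf) hlead
    exact ⟨Rmap v, ⟨g, (hkerΓ g).mpr hgker, hg0, hglead⟩, hle⟩
  have hup : {m | ∃ u ∈ leadSet IΓh, u ≤ m}
      = {m : Fin (d + r + 2) →₀ ℕ | ∃ u ∈ leadSet IΓ, Finsupp.mapDomain Fin.succ u ≤ m} := by
    ext m
    constructor
    · rintro ⟨v, hv, hle⟩
      obtain ⟨u, hu, hle'⟩ := hleadΓh_sub v hv
      exact ⟨u, hu, hle'.trans hle⟩
    · rintro ⟨u, hu, hle⟩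
      exact ⟨_, hleadΓ_map u hu, hle⟩
  have hmon1 : monSet K (initialIdeal IΓ) = {m | ∃ u ∈ leadSet IΓ, u ≤ m} :=
    monSet_initialIdeal _
  have hmon2 : monSet K (initialIdeal IΓh)
      = {m : Fin (d + r + 2) →₀ ℕ | ∃ u ∈ leadSet IΓ, Finsupp.mapDomain Fin.succ u ≤ m} :=
    (monSet_initialIdeal _).trans hup
  have e2 : minMonGens K (initialIdeal IΓ)
      = {m : Fin (d + r + 1) →₀ ℕ | (∃ u ∈ leadSet IΓ, u ≤ m) ∧
          ∀ m', (∃ u ∈ leadSet IΓ, u ≤ m') → m' ≤ m → m' = m} := by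
    ext m
    rw [minMonGens]
    simp only [Set.mem_setOf_eq, hmon1]
  have e1 : minMonGens K (initialIdeal IΓh)
      = {v : Fin (d + r + 2) →₀ ℕ | (∃ u ∈ leadSet IΓ, Finsupp.mapDomain Fin.succ u ≤ v) ∧
          ∀ v', (∃ u ∈ leadSet IΓ, Finsupp.mapDomain Fin.succ u ≤ v') → v' ≤ v → v' = v} := by
    ext v
    rw [minMonGens]
    simp only [Set.mem_setOf_eq, hmon2]
  have part1 : minMonGens K (initialIdeal IΓh) =
      Finsupp.mapDomain (Fin.succ) '' minMonGens K (initialIdeal IΓ) := by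
    rw [e1, e2]
    exact min_eq (leadSet IΓ)
  refine ⟨part1, ?_, ?_⟩
  · intro H u' hmem i hi
    rw [part1] at hmem
    obtain ⟨u, hu, rfl⟩ := hmem
    induction i using Fin.cases with
    | zero => rw [mapDomain_succ_apply_zero]
    | succ j =>
      rw [mapDomain_succ_apply_succ]
      refine H u hu j ?_
      rw [Fin.val_succ] at hi
      omega
  · intro H u hmem i hi
    have hmem' : Finsupp.mapDomain Fin.succ u ∈ minMonGens K (initialIdeal IΓh) := by
      rw [part1]
      exact ⟨u, hmem, rfl⟩
    have := H _ hmem' i.succ (by rw [Fin.val_succ]; omega)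
    rwa [mapDomain_succ_apply_succ] at this
end
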